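/- Fix η > 6 and define q_η(x) = Q( (x − η)/√(2x) ) for x > 0. Then there exists a unique x₁ > η satisfying (1/(4√π)) · e^{−(x₁−η)²/(4x₁)} · ( η/√x₁ + √x₁ ) = Q( (η − x₁)/√(2x₁) ). Moreover, the function g_η : [0,∞) → ℝ defined by g_η(x) = Q( (x−η)/√(2x) ) for x > x₁ and g_η(x) = 1 − (x/x₁)·Q( (η − x₁)/√(2x₁) ) for 0 ≤ x ≤ x₁ is convex on [0,∞) and satisfies g_η(x) ≤ q_η(x) for all x > 0; i.e., g_η is a convex lower bound on q_η whose linear piece is the tangent line to q_η through (0,1) with tangency point x₁. -/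

import Mathlib

open MeasureTheory ProbabilityTheory

/-- The Gaussian Q-function `Q(y) = P[Z > y]` for `Z` standard normal. -/
noncomputable def gaussianQ (y : ℝ) : ℝ :=
  (gaussianReal 0 1 (Set.Ioi y)).toReal

/-- The function `q_η(x) = Q((x - η)/√(2x))` for `x > 0`. -/
noncomputable def qEta (η x : ℝ) : ℝ :=
  gaussianQ ((x - η) / Real.sqrt (2 * x))

/-- The tangency equation (14) determining the tangency point `x₁`. -/
def TangencyEq (η x₁ : ℝ) : Prop :=
  (1 / (4 * Real.sqrt Real.pi)) * Real.exp (-(x₁ - η) ^ 2 / (4 * x₁)) *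
      (η / Real.sqrt x₁ + Real.sqrt x₁) =
    gaussianQ ((η - x₁) / Real.sqrt (2 * x₁))

/-- The convex lower bound `g_η` built from the tangency point `x₁`. -/
noncomputable def gEta (η x₁ x : ℝ) : ℝ :=
  if x₁ < x then qEta η x
  else 1 - (x / x₁) * gaussianQ ((η - x₁) / Real.sqrt (2 * x₁))


open Set Filter Topology

noncomputable def phi (y : ℝ) : ℝ := (Real.sqrt (2 * Real.pi))⁻¹ * Real.exp (-y^2/2)

lemma phi_eq : gaussianPDFReal 0 1 = phi := by
  ext x
  simp [gaussianPDFReal, phi]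

lemma phi_pos (y : ℝ) : 0 < phi y := by
  have h := Real.pi_pos
  unfold phi
  positivity

lemma phi_continuous : Continuous phi := by
  unfold phi
  fun_prop

lemma phi_integrable : Integrable phi := phi_eq ▸ integrable_gaussianPDFReal 0 1

lemma Q_eq_one_sub (y : ℝ) : gaussianQ y = 1 - ∫ t in Set.Iic y, phi t := by
  have h1 : gaussianReal 0 1 (Set.Ioi y) = 1 - gaussianReal 0 1 (Set.Iic y) := by
    rw [← prob_compl_eq_one_sub measurableSet_Iic, compl_Iic]
  have h2 : gaussianReal 0 1 (Set.Iic y) = ENNReal.ofReal (∫ t in Set.Iic y, phi t) := by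
    rw [gaussianReal_apply_eq_integral 0 one_ne_zero, phi_eq]
  have hnn : 0 ≤ ∫ t in Set.Iic y, phi t :=
    integral_nonneg fun t => (phi_pos t).le
  have hle : gaussianReal 0 1 (Set.Iic y) ≤ 1 := prob_le_one
  rw [gaussianQ, h1, h2]
  rw [ENNReal.toReal_sub_of_le (h2 ▸ hle) ENNReal.one_ne_top]
  simp [ENNReal.toReal_ofReal hnn]


lemma Q_hasDerivAt (y : ℝ) : HasDerivAt gaussianQ (-(phi y)) y := by
  have key : gaussianQ = fun z => (1 - ∫ t in Set.Iic (0:ℝ), phi t) - ∫ t in (0:ℝ)..z, phi t := by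
    funext z
    rw [Q_eq_one_sub, ← intervalIntegral.integral_Iic_sub_Iic (phi_integrable.integrableOn)
      (phi_integrable.integrableOn)]
    ring
  have hd : HasDerivAt (fun z => ∫ t in (0:ℝ)..z, phi t) (phi y) y := by
    exact intervalIntegral.integral_hasDerivAt_right (phi_integrable.intervalIntegrable)
      (phi_continuous.stronglyMeasurableAtFilter _ _) phi_continuous.continuousAt
  rw [key]
  exact ((hasDerivAt_const y (1 - ∫ t in Set.Iic (0:ℝ), phi t)).sub hd).congr_deriv (by simp)

lemma Q_antitone : Antitone gaussianQ := by
  intro a b hab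
  have : gaussianReal 0 1 (Set.Ioi b) ≤ gaussianReal 0 1 (Set.Ioi a) :=
    measure_mono (Ioi_subset_Ioi hab)
  exact ENNReal.toReal_mono (measure_ne_top _ _) this

lemma phi_even (y : ℝ) : phi (-y) = phi y := by simp [phi]

lemma phi_total : ∫ t, phi t = 1 := by
  rw [← phi_eq]
  exact integral_gaussianPDFReal_eq_one 0 one_ne_zero

lemma Q_reflect (y : ℝ) : gaussianQ (-y) = 1 - gaussianQ y := by
  have h1 : (∫ t in Set.Iic (-y), phi t) = ∫ t in Set.Ioi y, phi t := by
    rw [← integral_comp_neg_Ioi]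
    simp [phi_even]
  have h2 : (∫ t in Set.Iic y, phi t) + ∫ t in Set.Ioi y, phi t = 1 := by
    rw [intervalIntegral.integral_Iic_add_Ioi phi_integrable.integrableOn
      phi_integrable.integrableOn, phi_total]
  rw [Q_eq_one_sub, Q_eq_one_sub, h1]
  linarith

lemma Q_zero : gaussianQ 0 = 1/2 := by
  have := Q_reflect 0
  rw [neg_zero] at this
  linarith

lemma Q_tendsto_atBot : Tendsto gaussianQ atBot (𝓝 1) := by
  have h : gaussianQ = fun y => 1 - cdf (gaussianReal 0 1) y := by
    funext y
    rw [cdf_eq_real, measureReal_def, Q_eq_one_sub, gaussianReal_apply_eq_integral 0 one_ne_zero, phi_eq,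
      ENNReal.toReal_ofReal (integral_nonneg fun t => (phi_pos t).le)]
  rw [h]
  simpa using (tendsto_const_nhds (x := (1:ℝ))).sub (tendsto_cdf_atBot (gaussianReal 0 1))


noncomputable def uu (η x : ℝ) : ℝ := (x - η) / Real.sqrt (2*x)
noncomputable def uu' (η x : ℝ) : ℝ := (x + η) / (2 * Real.sqrt (2*x) * x)
noncomputable def qd (η x : ℝ) : ℝ := -(phi (uu η x) * uu' η x)
noncomputable def uu2 (η x : ℝ) : ℝ := -(Real.sqrt (2*x) * (x + 3*η)) / (8 * x^3)
def PP (η x : ℝ) : ℝ := x^3 + (η+2)*x^2 + (6*η - η^2)*x - η^3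
noncomputable def qd2 (η x : ℝ) : ℝ := phi (uu η x) * PP η x / (8 * Real.sqrt (2*x) * x^3)

lemma qEta_eq (η x : ℝ) : qEta η x = gaussianQ (uu η x) := rfl

lemma sqrt2x_hasDerivAt {x : ℝ} (hx : 0 < x) :
    HasDerivAt (fun t => Real.sqrt (2*t)) ((Real.sqrt (2*x))⁻¹) x := by
  have h := (Real.hasDerivAt_sqrt (by positivity : (2*x:ℝ) ≠ 0)).comp x
    ((hasDerivAt_id x).const_mul 2)
  have hs : 0 < Real.sqrt (2*x) := Real.sqrt_pos.2 (by positivity)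
  refine h.congr_deriv (Eq.symm ?_)
  field_simp

lemma uu_hasDerivAt (η : ℝ) {x : ℝ} (hx : 0 < x) :
    HasDerivAt (uu η) (uu' η x) x := by
  have hs : 0 < Real.sqrt (2*x) := Real.sqrt_pos.2 (by positivity)
  have hs2 : Real.sqrt (2*x) ^ 2 = 2*x := Real.sq_sqrt (by positivity)
  have h := ((hasDerivAt_id x).sub_const η).div (sqrt2x_hasDerivAt hx) (ne_of_gt hs)
  refine h.congr_deriv (Eq.symm ?_)
  rw [uu', id_eq]
  set s := Real.sqrt (2*x) with hsdef
  rw [show x = s^2/2 by linarith]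
  field_simp
  ring

lemma uu'_hasDerivAt (η : ℝ) {x : ℝ} (hx : 0 < x) :
    HasDerivAt (uu' η) (uu2 η x) x := by
  have hs : 0 < Real.sqrt (2*x) := Real.sqrt_pos.2 (by positivity)
  have hs2 : Real.sqrt (2*x) ^ 2 = 2*x := Real.sq_sqrt (by positivity)
  have hD : HasDerivAt (fun t => 2 * Real.sqrt (2*t) * t)
      (2 * (Real.sqrt (2*x))⁻¹ * x + 2 * Real.sqrt (2*x)) x := by
    have := (((sqrt2x_hasDerivAt hx).const_mul 2).mul (hasDerivAt_id x))
    refine this.congr_deriv (Eq.symm ?_)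
    simp only [id_eq, mul_one]
  have hDne : 2 * Real.sqrt (2*x) * x ≠ 0 := by positivity
  have h := ((hasDerivAt_id x).add_const η).div hD hDne
  refine h.congr_deriv (Eq.symm ?_)
  rw [uu2, id_eq]
  set s := Real.sqrt (2*x) with hsdef
  rw [show x = s^2/2 by linarith]
  field_simp
  ring

lemma phi_hasDerivAt (y : ℝ) : HasDerivAt phi (-(y * phi y)) y := by
  have h : HasDerivAt (fun z : ℝ => -z^2/2) (-y) y := by
    have := ((hasDerivAt_pow 2 y).neg).div_const 2
    refine this.congr_deriv (Eq.symm ?_)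
    simp
    ring
  have := ((Real.hasDerivAt_exp (-y^2/2)).comp y h).const_mul (Real.sqrt (2 * Real.pi))⁻¹
  refine this.congr_deriv (Eq.symm ?_)
  simp [phi]
  ring

lemma qEta_hasDerivAt (η : ℝ) {x : ℝ} (hx : 0 < x) :
    HasDerivAt (qEta η) (qd η x) x := by
  have h := (Q_hasDerivAt (uu η x)).comp x (uu_hasDerivAt η hx)
  refine h.congr_deriv (Eq.symm ?_)
  rw [qd]; ring

lemma qd_hasDerivAt (η : ℝ) {x : ℝ} (hx : 0 < x) :
    HasDerivAt (qd η) (qd2 η x) x := by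
  have hs : 0 < Real.sqrt (2*x) := Real.sqrt_pos.2 (by positivity)
  have hs2 : Real.sqrt (2*x) ^ 2 = 2*x := Real.sq_sqrt (by positivity)
  have h1 : HasDerivAt (fun t => phi (uu η t)) (-(uu η x * phi (uu η x)) * uu' η x) x :=
    (phi_hasDerivAt (uu η x)).comp x (uu_hasDerivAt η hx)
  have h := ((h1.mul (uu'_hasDerivAt η hx)).neg)
  refine h.congr_deriv (Eq.symm ?_)
  rw [qd2, uu2, uu', uu, PP]
  set s := Real.sqrt (2*x) with hsdef
  rw [show x = s^2/2 by linarith]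
  have hphi := (phi_pos ((s^2/2 - η) / s)).ne'
  field_simp
  ring


section PPfacts
variable {η : ℝ} (hη : 6 < η)

lemma PP_mono (hη : 6 < η) {x y : ℝ} (hx : 0 < x) (hxy : x ≤ y) (hPx : 0 ≤ PP η x) :
    PP η x ≤ PP η y := by
  have hy : 0 < y := lt_of_lt_of_le hx hxy
  have hη0 : (0:ℝ) < η := by linarith
  have hη3 : 0 < η^3 := by positivity
  have key : 0 < x^2 + (η+2)*x + (6*η - η^2) := by
    rcases le_or_gt (x^2 + (η+2)*x + (6*η - η^2)) 0 with h|h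
    · exfalso
      have : x * (x^2 + (η+2)*x + (6*η - η^2)) ≤ 0 := mul_nonpos_of_nonneg_of_nonpos hx.le h
      rw [PP] at hPx
      nlinarith
    · exact h
  have hF : 0 < y^2 + x*y + x^2 + (η+2)*(y+x) + (6*η - η^2) := by
    nlinarith [mul_pos hx hy, sq_nonneg y]
  have hfac := mul_nonneg (sub_nonneg.2 hxy) hF.le
  rw [PP, PP]
  nlinarith [hfac]

lemma PP_nonpos (hη : 6 < η) {x y : ℝ} (hx : 0 < x) (hxy : x ≤ y) (hPy : PP η y < 0) :
    PP η x ≤ 0 := by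
  by_contra h
  exact absurd (PP_mono hη hx hxy (le_of_not_ge (by linarith))) (by linarith)

lemma PP_pos_of_ge (hη : 6 < η) {x : ℝ} (hx : η ≤ x) : 0 < PP η x := by
  have h8 : PP η η = 8*η^2 := by rw [PP]; ring
  have : (0:ℝ) < 8*η^2 := by positivity
  calc (0:ℝ) < PP η η := by linarith
  _ ≤ PP η x := PP_mono hη (by linarith) hx (by linarith)

end PPfacts

lemma qd2_nonneg {η x : ℝ} (hx : 0 < x) (hP : 0 ≤ PP η x) : 0 ≤ qd2 η x := by
  have hs : 0 < Real.sqrt (2*x) := Real.sqrt_pos.2 (by positivity)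
  have := phi_pos (uu η x)
  rw [qd2]; positivity

lemma qd2_nonpos {η x : ℝ} (hx : 0 < x) (hP : PP η x ≤ 0) : qd2 η x ≤ 0 := by
  have hs : 0 < Real.sqrt (2*x) := Real.sqrt_pos.2 (by positivity)
  have hphi := phi_pos (uu η x)
  rw [qd2, div_nonpos_iff]
  right
  exact ⟨mul_nonpos_of_nonneg_of_nonpos hphi.le hP, by positivity⟩

lemma qd2_pos {η x : ℝ} (hx : 0 < x) (hP : 0 < PP η x) : 0 < qd2 η x := by
  have hs : 0 < Real.sqrt (2*x) := Real.sqrt_pos.2 (by positivity)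
  have := phi_pos (uu η x)
  rw [qd2]; positivity

noncomputable def hEta (η x : ℝ) : ℝ := qEta η x - x * qd η x

lemma hEta_hasDerivAt (η : ℝ) {x : ℝ} (hx : 0 < x) :
    HasDerivAt (hEta η) (-(x * qd2 η x)) x := by
  have h := (qEta_hasDerivAt η hx).sub ((hasDerivAt_id x).mul (qd_hasDerivAt η hx))
  refine h.congr_deriv (Eq.symm ?_)
  simp only [id_eq]
  ring

lemma neg_uu (η x : ℝ) : (η - x) / Real.sqrt (2*x) = -(uu η x) := by
  rw [uu]; ring

lemma tangency_iff {η x : ℝ} (hx : 0 < x) : TangencyEq η x ↔ hEta η x = 1 := by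
  have hs : 0 < Real.sqrt (2*x) := Real.sqrt_pos.2 (by positivity)
  have hsx : 0 < Real.sqrt x := Real.sqrt_pos.2 hx
  have hs2 : Real.sqrt (2*x) = Real.sqrt 2 * Real.sqrt x := Real.sqrt_mul (by norm_num) x
  have hspi : Real.sqrt (2*Real.pi) = Real.sqrt 2 * Real.sqrt Real.pi :=
    Real.sqrt_mul (by norm_num) _
  have h2 : Real.sqrt 2 * Real.sqrt 2 = 2 := Real.mul_self_sqrt (by norm_num)
  have hxx : Real.sqrt x * Real.sqrt x = x := Real.mul_self_sqrt hx.le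
  have hpi : 0 < Real.sqrt Real.pi := Real.sqrt_pos.2 Real.pi_pos
  have h2' : 0 < Real.sqrt 2 := Real.sqrt_pos.2 (by norm_num)
  have hu2 : (uu η x)^2/2 = (x-η)^2/(4*x) := by
    rw [uu, div_pow, hs2, mul_pow, Real.sq_sqrt (by norm_num : (0:ℝ) ≤ 2),
      Real.sq_sqrt hx.le]
    ring
  have hexp : Real.exp (-(x - η) ^ 2 / (4 * x)) = Real.exp (-(uu η x)^2/2) := by
    rw [neg_div, neg_div, hu2]
  have hlhs : (1 / (4 * Real.sqrt Real.pi)) * Real.exp (-(x - η) ^ 2 / (4 * x)) *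
      (η / Real.sqrt x + Real.sqrt x) = -(x * qd η x) := by
    rw [qd, uu', hexp]
    show _ = -(x * -((Real.sqrt (2*Real.pi))⁻¹ * Real.exp (-(uu η x)^2/2) * _))
    rw [hs2, hspi]
    field_simp
    ring_nf
    rw [Real.sq_sqrt (by norm_num : (0:ℝ) ≤ 2), Real.sq_sqrt hx.le]
    ring
  rw [TangencyEq, hlhs, neg_uu, Q_reflect]
  rw [hEta]
  show -(x * qd η x) = 1 - qEta η x ↔ _
  constructor <;> intro h <;> linarith


lemma uu_sq (η : ℝ) {x : ℝ} (hx : 0 < x) : (uu η x)^2/2 = (x-η)^2/(4*x) := by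
  rw [uu, div_pow, Real.sqrt_mul (by norm_num : (0:ℝ) ≤ 2), mul_pow,
    Real.sq_sqrt (by norm_num : (0:ℝ) ≤ 2), Real.sq_sqrt hx.le]
  ring

lemma hEta_eta_gt {η : ℝ} (hη : 6 < η) : 1 < hEta η η := by
  have hη0 : (0:ℝ) < η := by linarith
  have hsη : 0 < Real.sqrt η := Real.sqrt_pos.2 hη0
  have hpi : 0 < Real.sqrt Real.pi := Real.sqrt_pos.2 Real.pi_pos
  have h2 : (0:ℝ) < Real.sqrt 2 := Real.sqrt_pos.2 (by norm_num)
  have huu : uu η η = 0 := by rw [uu]; simp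
  have hq : qEta η η = 1/2 := by rw [qEta_eq, huu, Q_zero]
  have hphi0 : phi 0 = (Real.sqrt 2 * Real.sqrt Real.pi)⁻¹ := by
    rw [phi, ← Real.sqrt_mul (by norm_num : (0:ℝ) ≤ 2)]
    simp
  have huu' : uu' η η = (Real.sqrt 2 * Real.sqrt η)⁻¹ := by
    rw [uu', Real.sqrt_mul (by norm_num : (0:ℝ) ≤ 2)]
    rw [show η = Real.sqrt η * Real.sqrt η from (Real.mul_self_sqrt hη0.le).symm]
    field_simp
    ring
  have hss : Real.sqrt η * Real.sqrt η = η := Real.mul_self_sqrt hη0.le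
  have h22 : Real.sqrt 2 * Real.sqrt 2 = 2 := Real.mul_self_sqrt (by norm_num)
  have hterm : η * (phi 0 * uu' η η) = Real.sqrt η / (2 * Real.sqrt Real.pi) := by
    rw [hphi0, huu']
    field_simp
    linear_combination (-(Real.sqrt η*Real.sqrt η))*h22 +
      (-2)*hss
  have hlt : Real.sqrt Real.pi < Real.sqrt η :=
    Real.sqrt_lt_sqrt Real.pi_pos.le (by nlinarith [Real.pi_lt_d2])
  have : 1/2 < Real.sqrt η / (2 * Real.sqrt Real.pi) := by
    rw [div_lt_div_iff₀ (by norm_num) (by positivity)]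
    nlinarith
  rw [hEta, hq, qd, huu]
  nlinarith [hterm]

lemma hEta_X_lt {η : ℝ} (hη : 6 < η) : hEta η (4*η+200) < 1 := by
  set X : ℝ := 4*η+200 with hX
  have hX0 : (0:ℝ) < X := by rw [hX]; linarith
  have hX1 : (1:ℝ) ≤ X := by rw [hX]; linarith
  have hsX : 0 < Real.sqrt (2*X) := Real.sqrt_pos.2 (by positivity)
  have huXnn : 0 ≤ uu η X := div_nonneg (by rw [hX]; linarith) hsX.le
  have hq : qEta η X ≤ 1/2 := by
    rw [qEta_eq, ← Q_zero]
    exact Q_antitone huXnn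
  have hterm : X * (phi (uu η X) * uu' η X) < 1/2 := by
    have hphi : phi (uu η X) = (Real.sqrt (2*Real.pi))⁻¹ * Real.exp (-(X-η)^2/(4*X)) := by
      rw [phi, neg_div, neg_div, ← uu_sq η hX0]
    have hbound : (X-η)^2/(4*X) ≥ η/2 + 50 := by
      rw [ge_iff_le, le_div_iff₀ (by positivity)]
      rw [hX]
      nlinarith [sq_nonneg η]
    have hexp : Real.exp (-(X-η)^2/(4*X)) ≤ Real.exp (-(η/2+50)) := by
      rw [Real.exp_le_exp, neg_div]
      linarith
    have hspi : (1:ℝ) ≤ Real.sqrt (2*Real.pi) := by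
      rw [show (1:ℝ) = Real.sqrt 1 from (Real.sqrt_one).symm]
      exact Real.sqrt_le_sqrt (by nlinarith [Real.pi_gt_three])
    have hsX1 : (1:ℝ) ≤ Real.sqrt (2*X) := by
      rw [show (1:ℝ) = Real.sqrt 1 from (Real.sqrt_one).symm]
      exact Real.sqrt_le_sqrt (by linarith)
    have hexp_big : 2*X < Real.exp (η/2+50) := by
      have h1 : η/4+25+1 ≤ Real.exp (η/4+25) := Real.add_one_le_exp _
      have h2 : Real.exp (η/2+50) = Real.exp (η/4+25) * Real.exp (η/4+25) := by
        rw [← Real.exp_add]; ring_nf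
      have h3 : (0:ℝ) < η/4+26 := by linarith
      have h4 : (η/4+26)*(η/4+26) ≤ Real.exp (η/4+25) * Real.exp (η/4+25) := by
        have := Real.exp_pos (η/4+25)
        nlinarith
      rw [h2, hX]
      nlinarith
    have hepos := Real.exp_pos (-(η/2+50))
    have key : X * ((Real.sqrt (2*Real.pi))⁻¹ * Real.exp (-(X-η)^2/(4*X)) * uu' η X)
        ≤ X * (Real.exp (-(η/2+50)) * ((X + η)/(2 * Real.sqrt (2*X) * X))) := by
      rw [uu']
      have he2 := Real.exp_pos (-(X-η)^2/(4*X))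
      have hinv : (Real.sqrt (2*Real.pi))⁻¹ ≤ 1 := by
        rw [inv_le_one_iff₀]; right; exact hspi
      have huu'pos : 0 < (X + η)/(2 * Real.sqrt (2*X) * X) := by
        apply div_pos (by rw [hX]; linarith) (by positivity)
      have : (Real.sqrt (2*Real.pi))⁻¹ * Real.exp (-(X-η)^2/(4*X)) ≤ Real.exp (-(η/2+50)) := by
        calc (Real.sqrt (2*Real.pi))⁻¹ * Real.exp (-(X-η)^2/(4*X))
            ≤ 1 * Real.exp (-(X-η)^2/(4*X)) := by
              apply mul_le_mul_of_nonneg_right hinv he2.le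
          _ = Real.exp (-(X-η)^2/(4*X)) := one_mul _
          _ ≤ Real.exp (-(η/2+50)) := hexp
      nlinarith [mul_le_mul_of_nonneg_right this huu'pos.le]
    have key2 : X * (Real.exp (-(η/2+50)) * ((X + η)/(2 * Real.sqrt (2*X) * X))) < 1/2 := by
      have hXη : X + η ≤ 2*X := by rw [hX]; linarith
      have h5 : (X + η)/(2 * Real.sqrt (2*X) * X) ≤ (2*X)/(2 * X) := by
        apply div_le_div₀ (by positivity) hXη (by positivity)
        nlinarith
      have h6 : (2*X)/(2*X) = 1 := by field_simp
      have h7 : Real.exp (-(η/2+50)) * (2*X) < 1 := by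
        rw [Real.exp_neg]
        rw [inv_mul_lt_iff₀ (Real.exp_pos _)]
        simpa using hexp_big
      calc X * (Real.exp (-(η/2+50)) * ((X + η)/(2 * Real.sqrt (2*X) * X)))
          ≤ X * (Real.exp (-(η/2+50)) * 1) := by
            apply mul_le_mul_of_nonneg_left _ hX0.le
            apply mul_le_mul_of_nonneg_left _ hepos.le
            calc (X + η)/(2 * Real.sqrt (2*X) * X) ≤ (2*X)/(2*X) := h5
              _ = 1 := h6
        _ = Real.exp (-(η/2+50)) * X := by ring
        _ < 1/2 := by nlinarith
    calc X * (phi (uu η X) * uu' η X)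
        = X * ((Real.sqrt (2*Real.pi))⁻¹ * Real.exp (-(X-η)^2/(4*X)) * uu' η X) := by
          rw [hphi]
      _ ≤ X * (Real.exp (-(η/2+50)) * ((X + η)/(2 * Real.sqrt (2*X) * X))) := key
      _ < 1/2 := key2
  rw [hEta, qd]
  nlinarith [hterm, hq]

lemma hEta_strictAntiOn {η : ℝ} (hη : 6 < η) : StrictAntiOn (hEta η) (Set.Ici η) := by
  apply strictAntiOn_of_deriv_neg (convex_Ici η)
  · intro x hx
    exact (hEta_hasDerivAt η (by simp at hx; linarith)).continuousAt.continuousWithinAt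
  · intro x hx
    rw [interior_Ici] at hx
    have hx0 : (0:ℝ) < x := by simp at hx; linarith
    rw [(hEta_hasDerivAt η hx0).deriv]
    have := qd2_pos hx0 (PP_pos_of_ge hη (le_of_lt hx))
    nlinarith

lemma exists_unique_x1 {η : ℝ} (hη : 6 < η) : ∃! x₁ : ℝ, η < x₁ ∧ TangencyEq η x₁ := by
  set X : ℝ := 4*η+200 with hX
  have hηX : η ≤ X := by rw [hX]; linarith
  have hcont : ContinuousOn (hEta η) (Set.Icc η X) := fun x hx =>
    (hEta_hasDerivAt η (by linarith [hx.1])).continuousAt.continuousWithinAt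
  have hIV := intermediate_value_Icc' hηX hcont
  have h1 : (1:ℝ) ∈ Set.Icc (hEta η X) (hEta η η) :=
    ⟨(hEta_X_lt hη).le, (hEta_eta_gt hη).le⟩
  obtain ⟨x₁, hx₁mem, hx₁⟩ := hIV h1
  have hx₁gt : η < x₁ := by
    rcases eq_or_lt_of_le hx₁mem.1 with h|h
    · exfalso; rw [← h] at hx₁; linarith [hEta_eta_gt hη, hx₁.symm ▸ (hEta_eta_gt hη)]
    · exact h
  have hx₁0 : (0:ℝ) < x₁ := by linarith
  refine ⟨x₁, ⟨hx₁gt, (tangency_iff hx₁0).2 hx₁⟩, ?_⟩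
  intro y ⟨hy, hTy⟩
  have hy0 : (0:ℝ) < y := by linarith
  have h1y : hEta η y = 1 := (tangency_iff hy0).1 hTy
  exact (hEta_strictAntiOn hη).injOn (le_of_lt hy) (le_of_lt hx₁gt) (by rw [h1y, hx₁])


section Main

variable {η x₁ : ℝ}

lemma Qrefl (hx₁0 : 0 < x₁) :
    gaussianQ ((η - x₁) / Real.sqrt (2 * x₁)) = 1 - qEta η x₁ := by
  rw [show (2:ℝ) * x₁ = 2 * x₁ from rfl, neg_uu, Q_reflect, qEta_eq]

lemma gEta_left (hx₁0 : 0 < x₁) {x : ℝ} (hx : x ≤ x₁) :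
    gEta η x₁ x = 1 - (1 - qEta η x₁)/x₁ * x := by
  rw [gEta, if_neg (not_lt.2 hx), Qrefl hx₁0]
  ring

lemma gEta_right {x : ℝ} (hx : x₁ < x) : gEta η x₁ x = qEta η x := if_pos hx

lemma slope_eq (hx₁0 : 0 < x₁) (hT : TangencyEq η x₁) :
    qd η x₁ = -((1 - qEta η x₁)/x₁) := by
  have h := (tangency_iff hx₁0).1 hT
  rw [hEta] at h
  field_simp
  linarith

variable (hη : 6 < η) (hx₁ : η < x₁) (hT : TangencyEq η x₁)

lemma qd_monoOn (hη : 6 < η) (hx₁ : η < x₁) : MonotoneOn (qd η) (Set.Ici x₁) := by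
  have hx₁0 : (0:ℝ) < x₁ := by linarith
  apply monotoneOn_of_deriv_nonneg (convex_Ici x₁)
  · exact fun x hx => (qd_hasDerivAt η (lt_of_lt_of_le hx₁0 hx)).continuousAt.continuousWithinAt
  · intro x hx
    rw [interior_Ici] at hx
    exact (qd_hasDerivAt η (lt_trans hx₁0 hx)).differentiableAt.differentiableWithinAt
  · intro x hx
    rw [interior_Ici] at hx
    rw [(qd_hasDerivAt η (lt_trans hx₁0 hx)).deriv]
    exact qd2_nonneg (lt_trans hx₁0 hx) (PP_pos_of_ge hη (by linarith [(show x₁ < x from hx).le] : η ≤ x)).le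

/-- tangent-slope bound at points left of x₁ where PP ≥ 0 -/
lemma S1 (hη : 6 < η) (hx₁ : η < x₁) (hT : TangencyEq η x₁) {y : ℝ} (hy0 : 0 < y)
    (hy1 : y ≤ x₁) (hPy : 0 ≤ PP η y) : qd η y ≤ -((1 - qEta η x₁)/x₁) := by
  have hx₁0 : (0:ℝ) < x₁ := by linarith
  have hmono : MonotoneOn (qd η) (Set.Icc y x₁) := by
    apply monotoneOn_of_deriv_nonneg (convex_Icc y x₁)
    · exact fun t ht => (qd_hasDerivAt η (lt_of_lt_of_le hy0 ht.1)).continuousAt.continuousWithinAt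
    · intro t ht
      rw [interior_Icc] at ht
      exact (qd_hasDerivAt η (lt_trans hy0 ht.1)).differentiableAt.differentiableWithinAt
    · intro t ht
      rw [interior_Icc] at ht
      rw [(qd_hasDerivAt η (lt_trans hy0 ht.1)).deriv]
      exact qd2_nonneg (lt_trans hy0 ht.1) (le_trans hPy (PP_mono hη hy0 ht.1.le hPy))
  calc qd η y ≤ qd η x₁ := hmono ⟨le_refl y, hy1⟩ ⟨hy1, le_refl x₁⟩ hy1
    _ = -((1 - qEta η x₁)/x₁) := slope_eq hx₁0 hT

lemma d_nonneg (hη : 6 < η) (hx₁ : η < x₁) (hT : TangencyEq η x₁) {x : ℝ} (hx0 : 0 < x)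
    (hx : x ≤ x₁) : 0 ≤ qEta η x - (1 - (1 - qEta η x₁)/x₁ * x) := by
  have hx₁0 : (0:ℝ) < x₁ := by linarith
  set c : ℝ := (1 - qEta η x₁)/x₁ with hc
  set d : ℝ → ℝ := fun t => qEta η t - (1 - c * t) with hd
  have d_deriv : ∀ t : ℝ, 0 < t → HasDerivAt d (qd η t + c) t := by
    intro t ht
    have h := (qEta_hasDerivAt η ht).sub (((hasDerivAt_id t).const_mul c).const_sub 1)
    refine h.congr_deriv (Eq.symm ?_)
    ring
  have hdx₁ : d x₁ = 0 := by
    rw [hd]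
    simp only
    rw [hc]
    field_simp
    ring
  show 0 ≤ d x
  rcases le_or_gt (qd η x + c) 0 with hA | hB
  · -- case A : d' ≤ 0 on [x, x₁]
    have claim : ∀ t ∈ Set.Icc x x₁, qd η t + c ≤ 0 := by
      intro t ht
      rcases le_or_gt 0 (PP η t) with hP | hP
      · have := S1 hη hx₁ hT (lt_of_lt_of_le hx0 ht.1) ht.2 hP
        rw [← hc] at this
        linarith
      · -- PP η t < 0 : qd antitone on [x, t]
        have hanti : AntitoneOn (qd η) (Set.Icc x t) := by
          apply antitoneOn_of_deriv_nonpos (convex_Icc x t)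
          · exact fun s hs =>
              (qd_hasDerivAt η (lt_of_lt_of_le hx0 hs.1)).continuousAt.continuousWithinAt
          · intro s hs
            rw [interior_Icc] at hs
            exact (qd_hasDerivAt η (lt_trans hx0 hs.1)).differentiableAt.differentiableWithinAt
          · intro s hs
            rw [interior_Icc] at hs
            rw [(qd_hasDerivAt η (lt_trans hx0 hs.1)).deriv]
            exact qd2_nonpos (lt_trans hx0 hs.1) (PP_nonpos hη (lt_trans hx0 hs.1) hs.2.le hP)
        have := hanti ⟨le_refl x, ht.1⟩ ⟨ht.1, le_refl t⟩ ht.1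
        linarith
    have hantiD : AntitoneOn d (Set.Icc x x₁) := by
      apply antitoneOn_of_deriv_nonpos (convex_Icc x x₁)
      · exact fun t ht => (d_deriv t (lt_of_lt_of_le hx0 ht.1)).continuousAt.continuousWithinAt
      · intro t ht
        rw [interior_Icc] at ht
        exact (d_deriv t (lt_trans hx0 ht.1)).differentiableAt.differentiableWithinAt
      · intro t ht
        rw [interior_Icc] at ht
        rw [(d_deriv t (lt_trans hx0 ht.1)).deriv]
        exact claim t ⟨ht.1.le, ht.2.le⟩
    have := hantiD ⟨le_refl x, hx⟩ ⟨hx, le_refl x₁⟩ hx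
    linarith
  · -- case B
    have hPx : PP η x < 0 := by
      by_contra h
      have := S1 hη hx₁ hT hx0 hx (le_of_not_gt h)
      rw [← hc] at this
      linarith
    have hmonoD : MonotoneOn d (Set.Ioc 0 x) := by
      apply monotoneOn_of_deriv_nonneg (convex_Ioc 0 x)
      · exact fun t ht => (d_deriv t ht.1).continuousAt.continuousWithinAt
      · intro t ht
        rw [interior_Ioc] at ht
        exact (d_deriv t ht.1).differentiableAt.differentiableWithinAt
      · intro t ht
        rw [interior_Ioc] at ht
        rw [(d_deriv t ht.1).deriv]
        have hanti : AntitoneOn (qd η) (Set.Icc t x) := by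
          apply antitoneOn_of_deriv_nonpos (convex_Icc t x)
          · exact fun s hs =>
              (qd_hasDerivAt η (lt_of_lt_of_le ht.1 hs.1)).continuousAt.continuousWithinAt
          · intro s hs
            rw [interior_Icc] at hs
            exact (qd_hasDerivAt η (lt_trans ht.1 hs.1)).differentiableAt.differentiableWithinAt
          · intro s hs
            rw [interior_Icc] at hs
            rw [(qd_hasDerivAt η (lt_trans ht.1 hs.1)).deriv]
            exact qd2_nonpos (lt_trans ht.1 hs.1) (PP_nonpos hη (lt_trans ht.1 hs.1) hs.2.le hPx)
        have := hanti ⟨le_refl t, ht.2.le⟩ ⟨ht.2.le, le_refl x⟩ ht.2.le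
        linarith
    -- limit of d at 0+
    have tsq : Tendsto (fun t : ℝ => Real.sqrt (2*t)) (𝓝[>] 0) (𝓝[>] (0:ℝ)) := by
      apply tendsto_nhdsWithin_of_tendsto_nhds_of_eventually_within
      · have : Continuous (fun t : ℝ => Real.sqrt (2*t)) :=
          Real.continuous_sqrt.comp (continuous_const.mul continuous_id)
        have h0 := this.tendsto 0
        simpa using h0.mono_left nhdsWithin_le_nhds
      · filter_upwards [self_mem_nhdsWithin] with t ht
        have ht' : (0:ℝ) < t := ht
        exact Real.sqrt_pos.2 (by positivity : (0:ℝ) < 2*t)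
    have tinv : Tendsto (fun t : ℝ => (Real.sqrt (2*t))⁻¹) (𝓝[>] 0) atTop :=
      tendsto_inv_nhdsGT_zero.comp tsq
    have tnum : Tendsto (fun t : ℝ => t - η) (𝓝[>] 0) (𝓝 (-η)) := by
      have : Tendsto (fun t : ℝ => t - η) (𝓝 (0:ℝ)) (𝓝 (0 - η)) :=
        (continuous_id.sub continuous_const).tendsto 0
      simpa using this.mono_left nhdsWithin_le_nhds
    have tU : Tendsto (fun t => uu η t) (𝓝[>] 0) atBot := by
      have := Filter.Tendsto.neg_mul_atTop (by linarith : -η < 0) tnum tinv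
      apply this.congr
      intro t
      rw [uu, div_eq_mul_inv]
    have tq : Tendsto (fun t => qEta η t) (𝓝[>] 0) (𝓝 1) := by
      have := Q_tendsto_atBot.comp tU
      apply this.congr
      intro t
      rw [Function.comp_apply, qEta_eq]
    have tlin : Tendsto (fun t : ℝ => 1 - c * t) (𝓝[>] 0) (𝓝 1) := by
      have : Tendsto (fun t : ℝ => 1 - c * t) (𝓝 (0:ℝ)) (𝓝 (1 - c * 0)) :=
        (continuous_const.sub (continuous_const.mul continuous_id)).tendsto 0
      simpa using this.mono_left nhdsWithin_le_nhds
    have tD : Tendsto d (𝓝[>] 0) (𝓝 0) := by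
      have := tq.sub tlin
      simpa using this
    apply le_of_tendsto tD
    filter_upwards [Ioc_mem_nhdsGT hx0] with t ht
    exact hmonoD ht ⟨hx0, le_refl x⟩ ht.2

end Main


lemma gEta_convex {η x₁ : ℝ} (hη : 6 < η) (hx₁ : η < x₁) (hT : TangencyEq η x₁) :
    ConvexOn ℝ (Set.Ici (0:ℝ)) (gEta η x₁) := by
  have hx₁0 : (0:ℝ) < x₁ := by linarith
  set c : ℝ := (1 - qEta η x₁)/x₁ with hc
  have hl : ∀ x : ℝ, HasDerivAt (fun t => 1 - c * t) (-c) x := by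
    intro x
    have := ((hasDerivAt_id x).const_mul c).const_sub 1
    simpa using this
  have hgl : ∀ x : ℝ, x < x₁ → HasDerivAt (gEta η x₁) (-c) x := by
    intro x hx
    apply (hl x).congr_of_eventuallyEq
    filter_upwards [Iio_mem_nhds hx] with y hy
    exact gEta_left hx₁0 (le_of_lt hy)
  have hgr : ∀ x : ℝ, x₁ < x → HasDerivAt (gEta η x₁) (qd η x) x := by
    intro x hx
    apply (qEta_hasDerivAt η (lt_trans hx₁0 hx)).congr_of_eventuallyEq
    filter_upwards [Ioi_mem_nhds hx] with y hy
    exact gEta_right hy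
  have hgm : HasDerivAt (gEta η x₁) (-c) x₁ := by
    have hval : gEta η x₁ x₁ = qEta η x₁ := by
      rw [gEta_left hx₁0 (le_refl x₁)]
      field_simp
      ring
    have hleft : HasDerivWithinAt (gEta η x₁) (-c) (Set.Iic x₁) x₁ := by
      apply ((hl x₁).hasDerivWithinAt).congr
      · exact fun y hy => gEta_left hx₁0 hy
      · exact gEta_left hx₁0 (le_refl x₁)
    have hright : HasDerivWithinAt (gEta η x₁) (-c) (Set.Ici x₁) x₁ := by
      have hq : HasDerivAt (qEta η) (-c) x₁ := by
        have := qEta_hasDerivAt η hx₁0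
        rwa [slope_eq hx₁0 hT, ← hc] at this
      apply (hq.hasDerivWithinAt).congr
      · intro y hy
        rcases eq_or_lt_of_le (show x₁ ≤ y from hy) with h|h
        · rw [← h, hval]
        · exact gEta_right h
      · exact hval
    have := hleft.union hright
    rwa [Set.Iic_union_Ici, hasDerivWithinAt_univ] at this
  have dval1 : ∀ x : ℝ, x ≤ x₁ → deriv (gEta η x₁) x = -c := by
    intro x hx
    rcases eq_or_lt_of_le hx with h|h
    · rw [h]; exact hgm.deriv
    · exact (hgl x h).deriv
  have dval2 : ∀ x : ℝ, x₁ < x → deriv (gEta η x₁) x = qd η x := fun x hx => (hgr x hx).deriv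
  apply MonotoneOn.convexOn_of_deriv (convex_Ici 0)
  · intro x hx
    rcases lt_trichotomy x x₁ with h|h|h
    · exact (hgl x h).continuousAt.continuousWithinAt
    · rw [h]; exact hgm.continuousAt.continuousWithinAt
    · exact (hgr x h).continuousAt.continuousWithinAt
  · rw [interior_Ici]
    intro x hx
    rcases lt_trichotomy x x₁ with h|h|h
    · exact (hgl x h).differentiableAt.differentiableWithinAt
    · rw [h]; exact hgm.differentiableAt.differentiableWithinAt
    · exact (hgr x h).differentiableAt.differentiableWithinAt
  · rw [interior_Ici]
    intro a ha b hb hab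
    rcases le_or_gt b x₁ with hbx | hbx
    · rw [dval1 a (le_trans hab hbx), dval1 b hbx]
    · rw [dval2 b hbx]
      have hqb : qd η x₁ ≤ qd η b :=
        qd_monoOn hη hx₁ (Set.self_mem_Ici) (le_of_lt hbx) (le_of_lt hbx)
      rw [slope_eq hx₁0 hT, ← hc] at hqb
      rcases le_or_gt a x₁ with hax | hax
      · rw [dval1 a hax]
        exact hqb
      · rw [dval2 a hax]
        exact qd_monoOn hη hx₁ (le_of_lt hax) (le_of_lt hbx) hab


theorem convex_lower_bound_on_qEta (η : ℝ) (hη : 6 < η) :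
    (∃! x₁ : ℝ, η < x₁ ∧ TangencyEq η x₁) ∧
    ∀ x₁ : ℝ, η < x₁ → TangencyEq η x₁ →
      ConvexOn ℝ (Set.Ici (0 : ℝ)) (gEta η x₁) ∧
      ∀ x : ℝ, 0 < x → gEta η x₁ x ≤ qEta η x := by
  refine ⟨exists_unique_x1 hη, ?_⟩
  intro x₁ hx₁ hT
  refine ⟨gEta_convex hη hx₁ hT, ?_⟩
  intro x hx0
  rcases lt_or_ge x₁ x with h | h
  · rw [gEta_right h]
  · rw [gEta_left (by linarith : (0:ℝ) < x₁) h]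
    have := d_nonneg hη hx₁ hT hx0 h
    linarith
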